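/- Let k ≥ 2, d ≥ 1, T ≥ 1, and let (x_1,y_1),…,(x_T,y_T) ∈ ℝ^d × {1,…,k} be any sequence with ‖x_t‖ ≤ X for all t ∈ [T]. Run the multiclass Perceptron on this sequence and let M_T be its number of mistakes. Then for every U ∈ ℝ^{k×d}, writing L_2 = Σ_{t=1}^T ℓ(U,(x_t,y_t))² for the cumulative squared multiclass hinge loss of U, one has M_T ≤ L_2 + 2 X² ‖U‖_F² + X ‖U‖_F · 2√2 · √(L_2). -/

import Mathlib

open Finset

/-- Multiclass hinge loss: `max_{i ≠ y} [1 - (Ux)_y + (Ux)_i]_+`. -/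
noncomputable def mcHinge {k d : ℕ} (U : Matrix (Fin k) (Fin d) ℝ)
    (x : Fin d → ℝ) (y : Fin k) : ℝ :=
  ⨆ i : {i : Fin k // i ≠ y}, max 0 (1 - U.mulVec x y + U.mulVec x i.val)

/-- Cauchy–Schwarz for the Frobenius inner product written as a double sum. -/
lemma ip_cs {k d : ℕ} (A B : Matrix (Fin k) (Fin d) ℝ) :
    ∑ i, ∑ j, A i j * B i j ≤
      Real.sqrt (∑ i, ∑ j, A i j ^ 2) * Real.sqrt (∑ i, ∑ j, B i j ^ 2) := by
  have h := Real.sum_mul_le_sqrt_mul_sqrt (Finset.univ : Finset (Fin k × Fin d))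
    (fun p => A p.1 p.2) (fun p => B p.1 p.2)
  simpa [Fintype.sum_prod_type] using h

lemma sum_single_sub_mul {k : ℕ} (a b : Fin k) (f : Fin k → ℝ) :
    ∑ i, ((Pi.single a 1 - Pi.single b 1 : Fin k → ℝ) i) * f i = f a - f b := by
  simp [Pi.sub_apply, Pi.single_apply, sub_mul, Finset.sum_sub_distrib, ite_mul,
    Finset.sum_ite_eq']

lemma sum_single_sub_sq {k : ℕ} (a b : Fin k) (h : a ≠ b) :
    ∑ i, ((Pi.single a 1 - Pi.single b 1 : Fin k → ℝ) i) ^ 2 = 2 := by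
  have key : ∀ i : Fin k, ((Pi.single a 1 - Pi.single b 1 : Fin k → ℝ) i) ^ 2
      = (if i = a then (1:ℝ) else 0) + (if i = b then (1:ℝ) else 0) := by
    intro i
    rcases eq_or_ne i a with rfl | h1
    · rcases eq_or_ne i b with rfl | h2
      · exact absurd rfl h
      · simp [Pi.single_apply, h2]
    · rcases eq_or_ne i b with rfl | h2
      · simp [Pi.single_apply, h1]
      · simp [Pi.single_apply, h1, h2]
  rw [Finset.sum_congr rfl fun i _ => key i, Finset.sum_add_distrib]
  simp
  norm_num

set_option maxHeartbeats 1000000 in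
theorem multiclass_perceptron_squared_hinge_mistake_bound
    (k d T : ℕ) (hk : 2 ≤ k) (hd : 1 ≤ d) (hT : 1 ≤ T)
    (x : Fin T → Fin d → ℝ) (y : Fin T → Fin k)
    (W : ℕ → Matrix (Fin k) (Fin d) ℝ) (yh : Fin T → Fin k)
    (hW0 : W 0 = 0)
    (hargmax : ∀ t : Fin T, ∀ i : Fin k,
      (W t.val).mulVec (x t) i ≤ (W t.val).mulVec (x t) (yh t))
    (hWsucc : ∀ t : Fin T, W (t.val + 1) =
      W t.val + (if yh t ≠ y t then (1:ℝ) else 0) •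
        Matrix.vecMulVec (Pi.single (y t) 1 - Pi.single (yh t) 1) (x t))
    (M : ℝ) (hM : M = ∑ t, if yh t ≠ y t then (1:ℝ) else 0)
    (X : ℝ) (hX : ∀ t, Real.sqrt (∑ j, x t j ^ 2) ≤ X)
    (U : Matrix (Fin k) (Fin d) ℝ)
    (L₂ : ℝ) (hL₂ : L₂ = ∑ t, (mcHinge U (x t) (y t)) ^ 2) :
    M ≤ L₂ + 2 * X ^ 2 * (Real.sqrt (∑ i, ∑ j, U i j ^ 2)) ^ 2
      + X * Real.sqrt (∑ i, ∑ j, U i j ^ 2) * (2 * Real.sqrt 2) * Real.sqrt L₂ := by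
  classical
  set F := Real.sqrt (∑ i, ∑ j, U i j ^ 2) with hF
  have hFnn : 0 ≤ F := Real.sqrt_nonneg _
  have hXnn : 0 ≤ X := le_trans (Real.sqrt_nonneg _) (hX ⟨0, hT⟩)
  have hx2 : ∀ t : Fin T, ∑ j, x t j ^ 2 ≤ X ^ 2 := by
    intro t
    have h1 := hX t
    have h2 : (0:ℝ) ≤ ∑ j, x t j ^ 2 := by positivity
    nlinarith [Real.sq_sqrt h2, Real.sqrt_nonneg (∑ j, x t j ^ 2)]
  -- nonemptiness of the hinge index type
  have hne : ∀ t : Fin T, Nonempty {i : Fin k // i ≠ y t} := by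
    intro t
    obtain ⟨i, hi⟩ := Fintype.exists_ne_of_one_lt_card (by simpa using (show 1 < k by omega)) (y t)
    exact ⟨⟨i, hi⟩⟩
  have hℓnn : ∀ t : Fin T, 0 ≤ mcHinge U (x t) (y t) := by
    intro t
    haveI := hne t
    obtain ⟨i⟩ := hne t
    calc (0:ℝ) ≤ max 0 (1 - U.mulVec (x t) (y t) + U.mulVec (x t) i.val) := le_max_left _ _
      _ ≤ _ := le_ciSup (f := fun i : {i : Fin k // i ≠ y t} =>
          max 0 (1 - U.mulVec (x t) (y t) + U.mulVec (x t) i.val))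
          (Set.Finite.bddAbove (Set.finite_range _)) i
  have hℓge : ∀ t : Fin T, yh t ≠ y t →
      1 - U.mulVec (x t) (y t) + U.mulVec (x t) (yh t) ≤ mcHinge U (x t) (y t) := by
    intro t ht
    haveI := hne t
    calc 1 - U.mulVec (x t) (y t) + U.mulVec (x t) (yh t)
        ≤ max 0 (1 - U.mulVec (x t) (y t) + U.mulVec (x t) (yh t)) := le_max_right _ _
      _ ≤ _ := le_ciSup (f := fun i : {i : Fin k // i ≠ y t} =>
          max 0 (1 - U.mulVec (x t) (y t) + U.mulVec (x t) i.val))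
          (Set.Finite.bddAbove (Set.finite_range _)) ⟨yh t, ht⟩
  -- partial-sum bookkeeping functions
  set G1 : ℕ → ℝ := fun n => if h : n < T then
    (if yh ⟨n, h⟩ ≠ y ⟨n, h⟩ then (1:ℝ) else 0) *
      (1 - mcHinge U (x ⟨n, h⟩) (y ⟨n, h⟩)) else 0 with hG1
  set G2 : ℕ → ℝ := fun n => if h : n < T then
    2 * X ^ 2 * (if yh ⟨n, h⟩ ≠ y ⟨n, h⟩ then (1:ℝ) else 0) else 0 with hG2
  have main : ∀ n, n ≤ T →
      (∑ s ∈ Finset.range n, G1 s ≤ ∑ i, ∑ j, W n i j * U i j) ∧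
      (∑ i, ∑ j, (W n i j) ^ 2 ≤ ∑ s ∈ Finset.range n, G2 s) := by
    intro n
    induction n with
    | zero => intro _; simp [hW0]
    | succ n ih =>
      intro hn1
      have hnT : n < T := hn1
      obtain ⟨ih1, ih2⟩ := ih (le_of_lt hnT)
      set t : Fin T := ⟨n, hnT⟩ with hts
      set c : ℝ := if yh t ≠ y t then (1:ℝ) else 0 with hc
      set v : Fin k → ℝ := Pi.single (y t) 1 - Pi.single (yh t) 1 with hv
      have hW1 : ∀ i j, W (n + 1) i j = W n i j + c * (v i * x t j) := by
        intro i j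
        have h := hWsucc t
        have hval : t.val = n := rfl
        rw [hval] at h
        rw [h]
        simp [Matrix.add_apply, Matrix.smul_apply, Matrix.vecMulVec_apply, smul_eq_mul,
          ← hc, ← hv, mul_assoc]
      have hcnn : 0 ≤ c := by rw [hc]; split <;> norm_num
      constructor
      · -- inner product lower bound
        rw [Finset.sum_range_succ]
        have expand : ∑ i, ∑ j, W (n + 1) i j * U i j
            = (∑ i, ∑ j, W n i j * U i j) + c * ∑ i, v i * (U.mulVec (x t) i) := by
          have row : ∀ i : Fin k, ∑ j, W (n + 1) i j * U i j
              = ∑ j, W n i j * U i j + c * (v i * U.mulVec (x t) i) := by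
            intro i
            have pt : ∀ j, W (n + 1) i j * U i j
                = W n i j * U i j + (c * v i) * (U i j * x t j) := by
              intro j; rw [hW1]; ring
            rw [Finset.sum_congr rfl fun j _ => pt j, Finset.sum_add_distrib,
              ← Finset.mul_sum]
            have : U.mulVec (x t) i = ∑ j, U i j * x t j := by
              simp [Matrix.mulVec, dotProduct]
            rw [this]; ring
          rw [Finset.sum_congr rfl fun i _ => row i, Finset.sum_add_distrib,
            ← Finset.mul_sum]
          try ring
        rw [expand]
        have hvsum : ∑ i, v i * (U.mulVec (x t) i)
            = U.mulVec (x t) (y t) - U.mulVec (x t) (yh t) := by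
          rw [hv]; exact sum_single_sub_mul _ _ _
        rw [hvsum]
        have hG1n : G1 n = c * (1 - mcHinge U (x t) (y t)) := by
          rw [hG1]; simp only [hnT, dif_pos]; try rw [hc]
        have step : c * (1 - mcHinge U (x t) (y t))
            ≤ c * (U.mulVec (x t) (y t) - U.mulVec (x t) (yh t)) := by
          rw [hc]
          by_cases h : yh t ≠ y t
          · rw [if_pos h]; have := hℓge t h; linarith
          · rw [if_neg h]; simp
        rw [hG1n]
        exact add_le_add ih1 step
      · -- squared norm upper bound
        rw [Finset.sum_range_succ]
        have expand : ∑ i, ∑ j, (W (n + 1) i j) ^ 2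
            = (∑ i, ∑ j, (W n i j) ^ 2)
              + (2 * c) * (∑ i, v i * ((W n).mulVec (x t) i))
              + c ^ 2 * ((∑ i, v i ^ 2) * ∑ j, x t j ^ 2) := by
          have row : ∀ i : Fin k, ∑ j, (W (n + 1) i j) ^ 2
              = ∑ j, (W n i j) ^ 2 + (2 * c) * (v i * ((W n).mulVec (x t) i))
                + c ^ 2 * (v i ^ 2 * ∑ j, x t j ^ 2) := by
            intro i
            have pt : ∀ j, (W (n + 1) i j) ^ 2
                = (W n i j) ^ 2 + (2 * c * v i) * (W n i j * x t j)
                  + (c ^ 2 * v i ^ 2) * (x t j) ^ 2 := by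
              intro j; rw [hW1]; ring
            rw [Finset.sum_congr rfl fun j _ => pt j, Finset.sum_add_distrib,
              Finset.sum_add_distrib, ← Finset.mul_sum, ← Finset.mul_sum]
            have : (W n).mulVec (x t) i = ∑ j, W n i j * x t j := by
              simp [Matrix.mulVec, dotProduct]
            rw [this]; ring
          rw [Finset.sum_congr rfl fun i _ => row i, Finset.sum_add_distrib,
            Finset.sum_add_distrib, ← Finset.mul_sum, ← Finset.mul_sum,
            ← Finset.sum_mul]
          try ring
        rw [expand]
        have h1 : ∑ i, v i * ((W n).mulVec (x t) i) ≤ 0 := by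
          rw [hv, sum_single_sub_mul]
          have h := hargmax t (y t)
          have hval : t.val = n := rfl
          rw [hval] at h
          linarith
        have h2 : c ^ 2 * ((∑ i, v i ^ 2) * ∑ j, x t j ^ 2) ≤ 2 * X ^ 2 * c := by
          rw [hc, hv]
          by_cases h : yh t ≠ y t
          · rw [if_pos h, sum_single_sub_sq _ _ (Ne.symm h)]
            have := hx2 t
            nlinarith
          · rw [if_neg h]; simp
        have hG2n : G2 n = 2 * X ^ 2 * c := by
          rw [hG2]; simp only [hnT, dif_pos]; try rw [hc]
        have h1' : (2 * c) * (∑ i, v i * ((W n).mulVec (x t) i)) ≤ 0 :=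
          mul_nonpos_of_nonneg_of_nonpos (by linarith) h1
        rw [hG2n]
        linarith
  obtain ⟨fin1, fin2⟩ := main T le_rfl
  -- convert range sums to Fin sums
  have e1 : ∑ s ∈ Finset.range T, G1 s
      = ∑ t : Fin T, (if yh t ≠ y t then (1:ℝ) else 0) * (1 - mcHinge U (x t) (y t)) := by
    rw [← Fin.sum_univ_eq_sum_range (fun s => G1 s) T]
    refine Finset.sum_congr rfl fun i _ => ?_
    rw [hG1]; simp only [i.isLt, dif_pos, Fin.eta]
  have e2 : ∑ s ∈ Finset.range T, G2 s
      = ∑ t : Fin T, 2 * X ^ 2 * (if yh t ≠ y t then (1:ℝ) else 0) := by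
    rw [← Fin.sum_univ_eq_sum_range (fun s => G2 s) T]
    refine Finset.sum_congr rfl fun i _ => ?_
    rw [hG2]; simp only [i.isLt, dif_pos, Fin.eta]
  rw [e1] at fin1
  rw [e2] at fin2
  have hMnn : 0 ≤ M := by
    rw [hM]; apply Finset.sum_nonneg; intro t _; split <;> norm_num
  have hL2nn : 0 ≤ L₂ := by
    rw [hL₂]; positivity
  -- inner product lower bound in final form
  have fin1' : M - ∑ t : Fin T, (if yh t ≠ y t then (1:ℝ) else 0) * mcHinge U (x t) (y t)
      ≤ ∑ i, ∑ j, W T i j * U i j := by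
    have : ∑ t : Fin T, (if yh t ≠ y t then (1:ℝ) else 0) * (1 - mcHinge U (x t) (y t))
        = M - ∑ t : Fin T, (if yh t ≠ y t then (1:ℝ) else 0) * mcHinge U (x t) (y t) := by
      rw [hM, ← Finset.sum_sub_distrib]
      exact Finset.sum_congr rfl fun t _ => by ring
    linarith [fin1, this.symm.le, this.le]
  have fin2' : ∑ i, ∑ j, (W T i j) ^ 2 ≤ 2 * X ^ 2 * M := by
    rw [hM, Finset.mul_sum]
    exact fin2
  -- Cauchy-Schwarz on the loss term
  have csl : ∑ t : Fin T, (if yh t ≠ y t then (1:ℝ) else 0) * mcHinge U (x t) (y t)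
      ≤ Real.sqrt M * Real.sqrt L₂ := by
    have h := Real.sum_mul_le_sqrt_mul_sqrt (Finset.univ : Finset (Fin T))
      (fun t => if yh t ≠ y t then (1:ℝ) else 0) (fun t => mcHinge U (x t) (y t))
    have hsq : ∑ t : Fin T, (if yh t ≠ y t then (1:ℝ) else 0) ^ 2 = M := by
      rw [hM]
      exact Finset.sum_congr rfl fun t _ => by split <;> norm_num
    rw [hsq, ← hL₂] at h
    exact h
  -- Cauchy-Schwarz on the matrices
  have csm : ∑ i, ∑ j, W T i j * U i j ≤ Real.sqrt 2 * X * Real.sqrt M * F := by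
    calc ∑ i, ∑ j, W T i j * U i j
        ≤ Real.sqrt (∑ i, ∑ j, (W T i j) ^ 2) * F := by
          rw [hF]
          exact ip_cs _ _
      _ ≤ Real.sqrt (2 * X ^ 2 * M) * F := by
          apply mul_le_mul_of_nonneg_right _ hFnn
          exact Real.sqrt_le_sqrt fin2'
      _ = Real.sqrt 2 * X * Real.sqrt M * F := by
          rw [Real.sqrt_mul (by positivity), Real.sqrt_mul (by norm_num),
            Real.sqrt_sq hXnn]
  -- combine
  have key : M ≤ Real.sqrt M * Real.sqrt L₂ + Real.sqrt 2 * X * Real.sqrt M * F := by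
    linarith
  set s := Real.sqrt M with hs
  set a := Real.sqrt L₂ + Real.sqrt 2 * X * F with ha
  have hsnn : 0 ≤ s := Real.sqrt_nonneg _
  have hann : 0 ≤ a := by positivity
  have hsM : s ^ 2 = M := Real.sq_sqrt hMnn
  have hkey2 : s ^ 2 ≤ s * a := by
    rw [hsM, ha]; nlinarith [key]
  have hMa : M ≤ a ^ 2 := by
    nlinarith [hkey2, sq_nonneg (s - a), hsM]
  have ha2 : a ^ 2 = L₂ + 2 * X ^ 2 * F ^ 2 + X * F * (2 * Real.sqrt 2) * Real.sqrt L₂ := by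
    have p2 : Real.sqrt 2 ^ 2 = 2 := Real.sq_sqrt (by norm_num)
    have pL : Real.sqrt L₂ ^ 2 = L₂ := Real.sq_sqrt hL2nn
    rw [ha]
    linear_combination pL + X ^ 2 * F ^ 2 * p2
  rw [ha2] at hMa
  exact hMa
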